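/- arXiv:math/0608410 — 4 statements merged into one kernel-verified Lean document; each statement's English description precedes it below -/
import Mathlib

section
/- Let ν > 0 and let Y : ℂ → ℂ be entire with |Y(p)| ≤ exp(ν·|p|) for all p ∈ ℂ. Then for every real x > e^{ν−1}, the Laplace transform ∫_0^∞ Y(t) e^{−xt} dt converges absolutely and equals the absolutely convergent series ∑_{k=0}^∞ Y⁽ᵏ⁾(0) x^{−k−1}. -/
open MeasureTheory Set
open scoped Nat

lemma aux_factorial (n : ℕ) (hn : 1 ≤ n) :
    (n ! : ℝ) ≤ Real.exp 1 * n * ((n : ℝ) / Real.exp 1) ^ n := by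
  have hn0 : (0:ℝ) < n := by exact_mod_cast hn
  have h1 : Stirling.stirlingSeq n ≤ Real.exp 1 / Real.sqrt 2 := by
    obtain ⟨m, rfl⟩ := Nat.exists_eq_add_of_le hn
    have := Stirling.stirlingSeq'_antitone (Nat.zero_le m)
    simpa [Function.comp, Nat.succ_eq_add_one, Nat.add_comm] using this
  have hden : 0 < Real.sqrt (2 * n) * ((n : ℝ) / Real.exp 1) ^ n := by positivity
  rw [Stirling.stirlingSeq, div_le_iff₀ hden] at h1
  refine h1.trans ?_
  have hsq : Real.sqrt (2 * (n:ℝ)) = Real.sqrt 2 * Real.sqrt n := Real.sqrt_mul (by norm_num) _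
  have h2 : Real.exp 1 / Real.sqrt 2 * (Real.sqrt (2 * n) * ((n : ℝ) / Real.exp 1) ^ n)
      = Real.exp 1 * Real.sqrt n * ((n : ℝ) / Real.exp 1) ^ n := by
    rw [hsq]; field_simp
  rw [h2]
  have h3 : Real.sqrt n ≤ (n : ℝ) := by
    have h := Real.sqrt_le_sqrt (show (n:ℝ) ≤ (n:ℝ)*(n:ℝ) by
      nlinarith [show (1:ℝ) ≤ n by exact_mod_cast hn])
    simpa [Real.sqrt_mul_self hn0.le] using h
  have hp : (0:ℝ) ≤ ((n : ℝ) / Real.exp 1) ^ n := by positivity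
  have := mul_le_mul_of_nonneg_right (mul_le_mul_of_nonneg_left h3 (Real.exp_pos 1).le) hp
  linarith

lemma cauchy_est (ν : ℝ) (Y : ℂ → ℂ) (hY : Differentiable ℂ Y)
    (hbound : ∀ p : ℂ, ‖Y p‖ ≤ Real.exp (ν * ‖p‖))
    (n : ℕ) (R : ℝ) (hR : 0 < R) :
    ‖iteratedDeriv n Y 0‖ ≤ n ! * Real.exp (ν * R) / R ^ n := by
  set Rn : NNReal := ⟨R, hR.le⟩ with hRn
  have hRc : (Rn : ℝ) = R := rfl
  have h := hY.hasFPowerSeriesOnBall 0 (show (0:NNReal) < Rn from hR)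
  have h1 : iteratedDeriv n Y 0 = n ! • (cauchyPowerSeries Y 0 Rn n fun _ => (1:ℂ)) := by
    rw [iteratedDeriv_eq_iteratedFDeriv, ← h.factorial_smul (1:ℂ) n]
  have h2 : ‖cauchyPowerSeries Y 0 Rn n fun _ => (1:ℂ)‖ ≤ ‖cauchyPowerSeries Y 0 (Rn:ℝ) n‖ := by
    simpa using (cauchyPowerSeries Y 0 Rn n).le_opNorm fun _ => (1:ℂ)
  have h3 := norm_cauchyPowerSeries_le Y 0 (Rn:ℝ) n
  have h4 : (∫ θ : ℝ in (0)..(2 * Real.pi), ‖Y (circleMap 0 (Rn:ℝ) θ)‖)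
      ≤ 2 * Real.pi * Real.exp (ν * R) := by
    have hint : IntervalIntegrable (fun θ : ℝ => ‖Y (circleMap 0 (Rn:ℝ) θ)‖) volume 0 (2*Real.pi) :=
      ((hY.continuous.comp (continuous_circleMap 0 (Rn:ℝ))).norm).intervalIntegrable _ _
    have hmon := intervalIntegral.integral_mono_on (μ := volume)
      (f := fun θ : ℝ => ‖Y (circleMap 0 (Rn:ℝ) θ)‖)
      (g := fun _ : ℝ => Real.exp (ν * R)) (by positivity) hint
      (intervalIntegrable_const) ?_
    · simpa [mul_comm] using hmon
    · intro θ _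
      have := hbound (circleMap 0 (Rn:ℝ) θ)
      rwa [show ‖circleMap 0 (Rn:ℝ) θ‖ = R by
        rw [norm_circleMap_zero, hRc, abs_of_pos hR]] at this
  have h5 : ‖cauchyPowerSeries Y 0 (Rn:ℝ) n‖ ≤ Real.exp (ν * R) / R ^ n := by
    refine h3.trans ?_
    rw [hRc, abs_of_pos hR]
    have hp : (0:ℝ) ≤ R⁻¹ ^ n := by positivity
    have := mul_le_mul_of_nonneg_right
      (mul_le_mul_of_nonneg_left h4 (by positivity : (0:ℝ) ≤ (2*Real.pi)⁻¹)) hp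
    calc (2 * Real.pi)⁻¹ * (∫ θ : ℝ in (0)..(2*Real.pi), ‖Y (circleMap 0 (Rn:ℝ) θ)‖) * R⁻¹ ^ n
        ≤ (2 * Real.pi)⁻¹ * (2 * Real.pi * Real.exp (ν * R)) * R⁻¹ ^ n := this
      _ = Real.exp (ν * R) / R ^ n := by
          rw [inv_pow, ← div_eq_mul_inv]
          field_simp
  calc ‖iteratedDeriv n Y 0‖ = ‖n ! • (cauchyPowerSeries Y 0 Rn n fun _ => (1:ℂ))‖ := by rw [h1]
    _ ≤ n ! * ‖cauchyPowerSeries Y 0 Rn n fun _ => (1:ℂ)‖ := by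
        simpa using norm_nsmul_le (n !) (cauchyPowerSeries Y 0 Rn n fun _ => (1:ℂ))
    _ ≤ n ! * (Real.exp (ν * R) / R ^ n) := by
        exact mul_le_mul_of_nonneg_left (h2.trans h5) (by positivity)
    _ = n ! * Real.exp (ν * R) / R ^ n := by ring

lemma key_integrable (k : ℕ) (x : ℝ) (hx : 0 < x) :
    IntegrableOn (fun t : ℝ => t ^ k * Real.exp (-(x * t))) (Ioi 0) := by
  have h := integrableOn_rpow_mul_exp_neg_mul_rpow (p := 1) (s := (k:ℝ)) (b := x)
    (lt_of_lt_of_le neg_one_lt_zero (Nat.cast_nonneg k)) zero_lt_one hx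
  refine h.congr_fun (fun t ht => ?_) measurableSet_Ioi
  dsimp only
  rw [Real.rpow_natCast, Real.rpow_one, neg_mul]

lemma key_int (k : ℕ) (x : ℝ) (hx : 0 < x) :
    ∫ t in Ioi (0:ℝ), t ^ k * Real.exp (-(x * t)) = k ! / x ^ (k + 1) := by
  have h := Real.integral_rpow_mul_exp_neg_mul_Ioi (a := (k:ℝ)+1) (by positivity) hx
  simp only [add_sub_cancel_right, Real.rpow_natCast] at h
  rw [h, Real.Gamma_nat_eq_factorial,
    show ((k:ℝ)+1) = ((k+1:ℕ):ℝ) by push_cast; ring, Real.rpow_natCast]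
  rw [div_pow, one_pow, div_mul_eq_mul_div, one_mul]

lemma key_cint (k : ℕ) (x : ℝ) (hx : 0 < x) :
    ∫ t in Ioi (0:ℝ), (t:ℂ) ^ k * Complex.exp (-(x:ℂ) * t)
      = ((k ! / x ^ (k + 1) : ℝ) : ℂ) := by
  rw [← key_int k x hx]
  rw [show (fun t : ℝ => (t:ℂ) ^ k * Complex.exp (-(x:ℂ) * t))
      = (fun t : ℝ => ((t ^ k * Real.exp (-(x * t)) : ℝ) : ℂ)) from funext fun t => ?_]
  · exact integral_ofReal
  push_cast
  rw [neg_mul]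

/-- If `Y` is entire with `|Y(p)| ≤ exp(ν |p|)`, then for real `x > e^{ν-1}`
the Laplace transform `∫_0^∞ Y(t) e^{-xt} dt` converges absolutely and equals
the absolutely convergent series `∑ Y⁽ᵏ⁾(0) x^{-k-1}`. -/
theorem stmt_1 (ν : ℝ) (hν : 0 < ν) (Y : ℂ → ℂ)
    (hY : Differentiable ℂ Y)
    (hbound : ∀ p : ℂ, ‖Y p‖ ≤ Real.exp (ν * ‖p‖))
    (x : ℝ) (hx : Real.exp (ν - 1) < x) :
    IntegrableOn (fun t : ℝ => Y t * Complex.exp (-(x : ℂ) * t)) (Set.Ioi 0) ∧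
    Summable (fun k : ℕ => ‖iteratedDeriv k Y 0 / (x : ℂ) ^ (k + 1)‖) ∧
    HasSum (fun k : ℕ => iteratedDeriv k Y 0 / (x : ℂ) ^ (k + 1))
      (∫ t in Set.Ioi (0 : ℝ), Y t * Complex.exp (-(x : ℂ) * t)) := by
  have hx0 : (0:ℝ) < x := lt_trans (Real.exp_pos _) hx
  have hνx : ν < x := lt_of_le_of_lt (by linarith [Real.add_one_le_exp (ν-1)]) hx
  set A : ℕ → ℂ := fun k => iteratedDeriv k Y 0 with hA
  -- norm of exp factor
  have hexpnorm : ∀ t : ℝ, ‖Complex.exp (-(x:ℂ) * t)‖ = Real.exp (-(x * t)) := by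
    intro t
    rw [Complex.norm_exp]
    congr 1
    simp [← Complex.ofReal_mul]
  -- derivative bounds
  have hAk : ∀ k : ℕ, 1 ≤ k → ‖A k‖ ≤ Real.exp 1 * k * ν ^ k := by
    intro k hk
    have hk0 : (0:ℝ) < k := by exact_mod_cast hk
    have hR : 0 < (k:ℝ)/ν := by positivity
    have h1 := cauchy_est ν Y hY hbound k ((k:ℝ)/ν) hR
    rw [show ν * ((k:ℝ)/ν) = (k:ℝ) by field_simp] at h1
    refine h1.trans ?_
    rw [div_le_iff₀ (by positivity : (0:ℝ) < ((k:ℝ)/ν)^k)]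
    have h3 : Real.exp 1 * k * ν ^ k * ((k:ℝ)/ν) ^ k = Real.exp 1 * k * (k:ℝ)^k := by
      rw [mul_assoc, ← mul_pow]
      congr 2
      field_simp
    have h4 : ((k:ℝ)/Real.exp 1)^k * Real.exp 1 ^ k = (k:ℝ)^k := by
      rw [← mul_pow]
      congr 1
      field_simp
    have he : Real.exp (k:ℝ) = Real.exp 1 ^ k := by
      rw [← Real.exp_nat_mul]; norm_num
    rw [he, h3]
    calc (k ! : ℝ) * Real.exp 1 ^ k
        ≤ (Real.exp 1 * k * ((k:ℝ)/Real.exp 1)^k) * Real.exp 1 ^ k :=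
          mul_le_mul_of_nonneg_right (aux_factorial k hk) (by positivity)
      _ = Real.exp 1 * k * (((k:ℝ)/Real.exp 1)^k * Real.exp 1 ^ k) := by ring
      _ = Real.exp 1 * k * (k:ℝ)^k := by rw [h4]
  -- norm of terms
  have hterm : ∀ k : ℕ, ‖A k / (x:ℂ) ^ (k+1)‖ = ‖A k‖ / x ^ (k+1) := by
    intro k
    rw [norm_div, norm_pow, Complex.norm_real, Real.norm_eq_abs, abs_of_pos hx0]
  -- the summable bound
  have hAb : ∀ k : ℕ, ‖A k‖ / x ^ (k+1) ≤ (Real.exp 1 / x) * (((k:ℝ)+1) * (ν/x)^k) := by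
    intro k
    rcases Nat.eq_zero_or_pos k with rfl | hk
    · have h0 : ‖A 0‖ ≤ 1 := by
        have := hbound 0
        simpa [hA, iteratedDeriv_zero] using this
      have h1 : (1:ℝ) ≤ Real.exp 1 := by linarith [Real.add_one_le_exp (1:ℝ), Real.exp_pos 1]
      simp only [pow_one, Nat.cast_zero, zero_add, pow_zero, mul_one, one_mul]
      calc ‖A 0‖ / x ≤ 1 / x := by gcongr
        _ ≤ Real.exp 1 / x := by gcongr
    · have hk0 : (0:ℝ) < k := by exact_mod_cast hk
      have h5 : Real.exp 1 * k * ν ^ k / x ^ (k+1) = (Real.exp 1 / x) * ((k:ℝ) * (ν/x)^k) := by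
        rw [pow_succ, div_pow]
        field_simp
      calc ‖A k‖ / x ^ (k+1) ≤ (Real.exp 1 * k * ν ^ k) / x ^ (k+1) := by
            gcongr
            exact hAk k hk
        _ = (Real.exp 1 / x) * ((k:ℝ) * (ν/x)^k) := h5
        _ ≤ (Real.exp 1 / x) * (((k:ℝ)+1) * (ν/x)^k) :=
            mul_le_mul_of_nonneg_left
              (mul_le_mul_of_nonneg_right (by linarith) (by positivity)) (by positivity)
  -- summability of the bound
  have hr0 : (0:ℝ) ≤ ν/x := by positivity
  have hr1 : ν/x < 1 := (div_lt_one hx0).mpr hνx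
  have hgs : Summable (fun k : ℕ => (Real.exp 1 / x) * (((k:ℝ)+1) * (ν/x)^k)) := by
    refine Summable.mul_left _ ?_
    have h1 : Summable (fun k : ℕ => (k:ℝ) * (ν/x)^k) := by
      simpa using summable_pow_mul_geometric_of_norm_lt_one (R := ℝ) (r := ν/x) 1
        (by rwa [Real.norm_eq_abs, abs_of_nonneg hr0])
    have h2 : Summable (fun k : ℕ => (ν/x)^k) := summable_geometric_of_lt_one hr0 hr1
    simpa [add_mul] using h1.add h2
  have hsummable : Summable (fun k : ℕ => ‖A k / (x:ℂ) ^ (k+1)‖) := by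
    refine Summable.of_nonneg_of_le (fun k => norm_nonneg _) (fun k => ?_) hgs
    rw [hterm k]
    exact hAb k
  -- integrability of the main function
  have hcont : Continuous fun t : ℝ => Y t * Complex.exp (-(x:ℂ) * t) := by
    apply Continuous.mul
    · exact hY.continuous.comp Complex.continuous_ofReal
    · exact Complex.continuous_exp.comp (by continuity)
  have hint1 : IntegrableOn (fun t : ℝ => Y t * Complex.exp (-(x:ℂ) * t)) (Ioi 0) := by
    refine Integrable.mono' (g := fun t : ℝ => Real.exp (-(x-ν) * t))
      (exp_neg_integrableOn_Ioi 0 (by linarith))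
      hcont.aestronglyMeasurable.restrict ?_
    refine (ae_restrict_iff' measurableSet_Ioi).mpr (Filter.Eventually.of_forall fun t ht => ?_)
    rw [norm_mul, hexpnorm t]
    have h2 := hbound t
    rw [Complex.norm_real, Real.norm_eq_abs, abs_of_pos ht] at h2
    calc ‖Y t‖ * Real.exp (-(x*t)) ≤ Real.exp (ν*t) * Real.exp (-(x*t)) := by
          gcongr
      _ = Real.exp (-(x-ν)*t) := by rw [← Real.exp_add]; ring_nf
  -- the term functions
  set F : ℕ → ℝ → ℂ := fun k t => ((k ! : ℂ)⁻¹ * A k * (t:ℂ)^k) * Complex.exp (-(x:ℂ)*t) with hF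
  have hFsum : ∀ t : ℝ, HasSum (fun k => F k t) (Y t * Complex.exp (-(x:ℂ)*t)) := by
    intro t
    have h := (Complex.hasSum_taylorSeries_of_entire hY 0 t).mul_right (Complex.exp (-(x:ℂ)*t))
    convert h using 2 with k
    · rfl
    simp only [hF, smul_eq_mul, sub_zero, hA]
    ring
  have hFcont : ∀ k, Continuous (F k) := by
    intro k
    apply Continuous.mul
    · exact continuous_const.mul (by continuity)
    · exact Complex.continuous_exp.comp (by continuity)
  have hFnormeq : ∀ k : ℕ, ∀ t ∈ Ioi (0:ℝ),
      ‖F k t‖ = ((k ! : ℝ)⁻¹ * ‖A k‖) * (t^k * Real.exp (-(x*t))) := by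
    intro k t ht
    rw [hF]
    simp only [norm_mul, hexpnorm t, norm_inv, norm_pow, Complex.norm_natCast,
      Complex.norm_real, Real.norm_eq_abs, abs_of_pos (mem_Ioi.mp ht)]
    ring
  have hFint : ∀ k, Integrable (F k) (volume.restrict (Ioi 0)) := by
    intro k
    refine Integrable.mono'
      (g := fun t : ℝ => ((k ! : ℝ)⁻¹ * ‖A k‖) * (t^k * Real.exp (-(x*t))))
      ((key_integrable k x hx0).const_mul _)
      (hFcont k).aestronglyMeasurable.restrict ?_
    refine (ae_restrict_iff' measurableSet_Ioi).mpr (Filter.Eventually.of_forall fun t ht => ?_)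
    rw [hFnormeq k t ht]
  have hFnorm : ∀ k : ℕ, (∫ t in Ioi (0:ℝ), ‖F k t‖) = ‖A k‖ / x ^ (k+1) := by
    intro k
    rw [setIntegral_congr_fun measurableSet_Ioi (hFnormeq k),
      MeasureTheory.integral_const_mul, key_int k x hx0]
    have hkf : ((k !:ℝ)) ≠ 0 := by exact_mod_cast (Nat.factorial_ne_zero k)
    field_simp
  have hFI : ∀ k : ℕ, (∫ t in Ioi (0:ℝ), F k t) = A k / (x:ℂ)^(k+1) := by
    intro k
    have h1 : (∫ t in Ioi (0:ℝ), F k t)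
        = ((k ! : ℂ)⁻¹ * A k) * ∫ t in Ioi (0:ℝ), (t:ℂ)^k * Complex.exp (-(x:ℂ)*t) := by
      rw [← MeasureTheory.integral_const_mul _ _]
      refine setIntegral_congr_fun measurableSet_Ioi (fun t ht => ?_)
      rw [hF]; ring
    rw [h1, key_cint k x hx0]
    have hkf : ((k !:ℂ)) ≠ 0 := by exact_mod_cast (Nat.factorial_ne_zero k)
    have hxc : ((x:ℂ)) ≠ 0 := by exact_mod_cast hx0.ne'
    push_cast
    field_simp
  have hsumint : Summable (fun k : ℕ => ∫ t in Ioi (0:ℝ), ‖F k t‖) := by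
    refine hsummable.congr (fun k => ?_)
    rw [hFnorm k, hterm k]
  have hmain := hasSum_integral_of_summable_integral_norm hFint hsumint
  have htsum : ∀ t : ℝ, (∑' k, F k t) = Y t * Complex.exp (-(x:ℂ)*t) := fun t => (hFsum t).tsum_eq
  refine ⟨hint1, hsummable, ?_⟩
  have h2 : (∫ t in Ioi (0:ℝ), ∑' k, F k t) = ∫ t in Ioi (0:ℝ), Y t * Complex.exp (-(x:ℂ)*t) := by
    exact setIntegral_congr_fun measurableSet_Ioi (fun t _ => htsum t)
  rw [← h2]
  have h3 : (fun k : ℕ => A k / (x:ℂ)^(k+1)) = fun k => ∫ t in Ioi (0:ℝ), F k t := by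
    funext k; rw [hFI k]
  exact h3 ▸ hmain
end

section
/- There exist constants c₁, c₂ > 0 such that for every real x ≥ 1: c₁ · x^{−1/2} e^{−x} ≤ ⌊x⌋! · x^{−⌊x⌋−1} ≤ c₂ · x^{−1/2} e^{−x}, and moreover c₁ · x^{−1/2} e^{−x} ≤ min_{k ∈ ℕ} k! x^{−k−1} ≤ c₂ · x^{−1/2} e^{−x}. -/
open Real

/-- Ratio of consecutive terms. -/
private lemma ratio_step (x : ℝ) (hx : 0 < x) (m : ℕ) :
    (Nat.factorial (m + 1) : ℝ) / x ^ (m + 1 + 1)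
      = (Nat.factorial m : ℝ) / x ^ (m + 1) * ((m + 1) / x) := by
  rw [Nat.factorial_succ]
  push_cast
  field_simp
  ring

/-- The term at `⌊x⌋₊` is the least. -/
private lemma floor_min (x : ℝ) (hx : 1 ≤ x) (k : ℕ) :
    (Nat.factorial ⌊x⌋₊ : ℝ) / x ^ (⌊x⌋₊ + 1) ≤ (Nat.factorial k : ℝ) / x ^ (k + 1) := by
  have hx0 : (0 : ℝ) < x := by linarith
  set n := ⌊x⌋₊ with hn
  have hnx : (n : ℝ) ≤ x := Nat.floor_le hx0.le
  have hxn : x < (n : ℝ) + 1 := Nat.lt_floor_add_one x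
  rcases le_or_gt n k with h | h
  · obtain ⟨j, rfl⟩ := Nat.exists_eq_add_of_le h
    clear h
    induction j with
    | zero => simp
    | succ j ih =>
      have hrw : n + (j + 1) = (n + j) + 1 := by ring
      rw [hrw, ratio_step x hx0]
      refine ih.trans (le_mul_of_one_le_right (by positivity) ?_)
      rw [le_div_iff₀ hx0]
      push_cast
      linarith
  · -- k < n : downward induction
    have key : ∀ j : ℕ, (Nat.factorial n : ℝ) / x ^ (n + 1)
        ≤ (Nat.factorial (n - j) : ℝ) / x ^ (n - j + 1) := by
      intro j
      induction j with
      | zero => simp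
      | succ j ih =>
        rcases le_or_gt n j with hj | hj
        · have h1 : n - (j + 1) = n - j := by omega
          rw [h1]; exact ih
        · have h1 : n - (j + 1) + 1 = n - j := by omega
          refine ih.trans ?_
          rw [← h1, ratio_step x hx0]
          refine mul_le_of_le_one_right (by positivity) ?_
          rw [div_le_one hx0]
          have : (n - (j + 1) + 1 : ℕ) ≤ n := by omega
          calc ((n - (j + 1) : ℕ) : ℝ) + 1 = ((n - (j + 1) + 1 : ℕ) : ℝ) := by push_cast; ring
            _ ≤ (n : ℝ) := by exact_mod_cast Nat.cast_le.mpr this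
            _ ≤ x := hnx
    have := key (n - k)
    rwa [Nat.sub_sub_self h.le] at this

/-- Rewriting of the Stirling denominator relative to `x^n`. -/
private lemma denom_rw (x : ℝ) (hx0 : 0 < x) (n : ℕ) :
    ((n : ℝ) / Real.exp 1) ^ n / x ^ n = ((n : ℝ) / x) ^ n * Real.exp (-(n : ℝ)) := by
  rw [Real.exp_neg, ← Real.exp_one_pow, div_pow, div_pow]
  have h1 : Real.exp 1 ^ n ≠ 0 := by positivity
  have h2 : x ^ n ≠ 0 := by positivity
  field_simp

/-- `(1+1/n)^n ≤ e`, in inverted form. -/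
private lemma inv_exp_le (n : ℕ) (hn : 1 ≤ n) :
    (Real.exp 1)⁻¹ ≤ ((n : ℝ) / ((n : ℝ) + 1)) ^ n := by
  have hn0 : (0 : ℝ) < n := by exact_mod_cast hn
  have h1 : ((n : ℝ) + 1) / n = 1 + 1 / n := by field_simp
  have h2 : (((n : ℝ) + 1) / n) ^ n ≤ Real.exp 1 := by
    rw [h1]
    calc (1 + 1 / (n : ℝ)) ^ n ≤ Real.exp (1 / n) ^ n := by
          apply pow_le_pow_left₀ (by positivity)
          have := Real.add_one_le_exp (1 / (n : ℝ))
          linarith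
      _ = Real.exp ((n : ℝ) * (1 / n)) := by rw [Real.exp_nat_mul]
      _ = Real.exp 1 := by rw [mul_one_div, div_self (ne_of_gt hn0)]
  have hpos : (0 : ℝ) < (((n : ℝ) + 1) / n) ^ n := by positivity
  calc (Real.exp 1)⁻¹ ≤ ((((n : ℝ) + 1) / n) ^ n)⁻¹ := by
        apply inv_anti₀ hpos h2
    _ = ((n : ℝ) / ((n : ℝ) + 1)) ^ n := by rw [← inv_pow, inv_div]

/-- The least term of the series `∑ k! x^{-k-1}` occurs at `k = ⌊x⌋` and
has magnitude proportional to `x^{-1/2} e^{-x}`. -/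
theorem stmt_12 :
    ∃ c₁ : ℝ, 0 < c₁ ∧ ∃ c₂ : ℝ, 0 < c₂ ∧ ∀ x : ℝ, 1 ≤ x →
      (c₁ * x ^ (-(1 : ℝ) / 2) * Real.exp (-x) ≤
          (Nat.factorial ⌊x⌋₊ : ℝ) / x ^ (⌊x⌋₊ + 1) ∧
        (Nat.factorial ⌊x⌋₊ : ℝ) / x ^ (⌊x⌋₊ + 1) ≤
          c₂ * x ^ (-(1 : ℝ) / 2) * Real.exp (-x)) ∧
      (∀ k : ℕ, c₁ * x ^ (-(1 : ℝ) / 2) * Real.exp (-x) ≤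
          (Nat.factorial k : ℝ) / x ^ (k + 1)) ∧
      (∃ k : ℕ, (Nat.factorial k : ℝ) / x ^ (k + 1) ≤
          c₂ * x ^ (-(1 : ℝ) / 2) * Real.exp (-x)) := by
  obtain ⟨a, ha, hstir⟩ := Stirling.stirlingSeq'_bounded_by_pos_constant
  have he : (0 : ℝ) < Real.exp 1 := Real.exp_pos 1
  refine ⟨a / Real.exp 1, by positivity, Real.exp 1 ^ 2, by positivity, fun x hx => ?_⟩
  have hx0 : (0 : ℝ) < x := by linarith
  set n := ⌊x⌋₊ with hndef
  have hn1 : 1 ≤ n := Nat.floor_pos.mpr hx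
  have hn0 : (0 : ℝ) < n := by exact_mod_cast hn1
  have hnx : (n : ℝ) ≤ x := Nat.floor_le hx0.le
  have hxn : x ≤ (n : ℝ) + 1 := (Nat.lt_floor_add_one x).le
  set D : ℝ := Real.sqrt (2 * n) * ((n : ℝ) / Real.exp 1) ^ n with hDdef
  have hD : 0 < D := by
    apply mul_pos (Real.sqrt_pos.mpr (by positivity)) (by positivity)
  have hseq : Stirling.stirlingSeq n = (Nat.factorial n : ℝ) / D := rfl
  -- lower Stirling bound
  have hlow : a * D ≤ (Nat.factorial n : ℝ) := by
    have := hstir (n - 1)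
    rw [Nat.sub_add_cancel hn1] at this
    rw [hseq, le_div_iff₀ hD] at this
    linarith
  -- upper Stirling bound
  have hup : (Nat.factorial n : ℝ) ≤ Real.exp 1 / Real.sqrt 2 * D := by
    have h1 : Stirling.stirlingSeq n ≤ Stirling.stirlingSeq 1 := by
      have := Stirling.stirlingSeq'_antitone (Nat.zero_le (n - 1))
      simpa [Function.comp, Nat.succ_eq_add_one, Nat.sub_add_cancel hn1] using this
    rw [Stirling.stirlingSeq_one, hseq, div_le_iff₀ hD] at h1
    linarith
  -- rpow facts
  have hhalf : x ^ (-(1 : ℝ) / 2) = x ^ ((1 : ℝ) / 2) / x := by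
    have h1 : x ^ (-(1 : ℝ) / 2) = x ^ ((1 : ℝ) / 2 - 1) := by norm_num
    rw [h1, Real.rpow_sub hx0, Real.rpow_one]
  have hsqrt : x ^ ((1 : ℝ) / 2) = Real.sqrt x := (Real.sqrt_eq_rpow x).symm
  -- key: central bound on D / x^(n+1)
  have hxpow : x ^ (n + 1) = x ^ n * x := pow_succ x n
  have hDx : D / x ^ (n + 1)
      = Real.sqrt (2 * n) * (((n : ℝ) / x) ^ n * Real.exp (-(n : ℝ))) / x := by
    rw [hDdef, hxpow, ← denom_rw x hx0 n]
    field_simp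
  -- lower bound for the floor term
  have main_low : a / Real.exp 1 * x ^ (-(1 : ℝ) / 2) * Real.exp (-x)
      ≤ (Nat.factorial n : ℝ) / x ^ (n + 1) := by
    have step1 : a * D / x ^ (n + 1) ≤ (Nat.factorial n : ℝ) / x ^ (n + 1) := by
      gcongr
    refine le_trans ?_ step1
    have hsx : x ^ ((1 : ℝ) / 2) ≤ Real.sqrt (2 * n) := by
      rw [hsqrt]
      have hn1' : (1 : ℝ) ≤ n := by exact_mod_cast hn1
      exact Real.sqrt_le_sqrt (by linarith)
    have hratio : (Real.exp 1)⁻¹ * Real.exp (-x)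
        ≤ ((n : ℝ) / x) ^ n * Real.exp (-(n : ℝ)) := by
      have h1 : ((n : ℝ) / ((n : ℝ) + 1)) ^ n ≤ ((n : ℝ) / x) ^ n := by
        gcongr
      have h2 : Real.exp (-x) ≤ Real.exp (-(n : ℝ)) := by
        apply Real.exp_le_exp.mpr; linarith
      calc (Real.exp 1)⁻¹ * Real.exp (-x)
          ≤ ((n : ℝ) / ((n : ℝ) + 1)) ^ n * Real.exp (-(n : ℝ)) := by
            apply mul_le_mul (inv_exp_le n hn1) h2 (Real.exp_pos _).le (by positivity)
        _ ≤ ((n : ℝ) / x) ^ n * Real.exp (-(n : ℝ)) := by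
            apply mul_le_mul_of_nonneg_right h1 (Real.exp_pos _).le
    have expand : a * D / x ^ (n + 1)
        = a * (Real.sqrt (2 * n) * (((n : ℝ) / x) ^ n * Real.exp (-(n : ℝ)))) / x := by
      rw [mul_div_assoc, hDx]; ring
    rw [expand, hhalf]
    have lhs_eq : a / Real.exp 1 * (x ^ ((1 : ℝ) / 2) / x) * Real.exp (-x)
        = a * (x ^ ((1 : ℝ) / 2) * ((Real.exp 1)⁻¹ * Real.exp (-x))) / x := by
      field_simp
    rw [lhs_eq]
    gcongr
  -- upper bound for the floor term
  have main_up : (Nat.factorial n : ℝ) / x ^ (n + 1)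
      ≤ Real.exp 1 ^ 2 * x ^ (-(1 : ℝ) / 2) * Real.exp (-x) := by
    have step1 : (Nat.factorial n : ℝ) / x ^ (n + 1)
        ≤ Real.exp 1 / Real.sqrt 2 * D / x ^ (n + 1) := by
      gcongr
    refine step1.trans ?_
    have hsx : Real.sqrt (2 * n) ≤ Real.sqrt 2 * x ^ ((1 : ℝ) / 2) := by
      rw [hsqrt, ← Real.sqrt_mul (by norm_num : (0:ℝ) ≤ 2)]
      have hn1' : (1 : ℝ) ≤ n := by exact_mod_cast hn1
      exact Real.sqrt_le_sqrt (by linarith)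
    have hratio : ((n : ℝ) / x) ^ n * Real.exp (-(n : ℝ))
        ≤ Real.exp 1 * Real.exp (-x) := by
      have h1 : ((n : ℝ) / x) ^ n ≤ 1 := by
        apply pow_le_one₀ (by positivity)
        rw [div_le_one hx0]; exact hnx
      have h2 : Real.exp (-(n : ℝ)) ≤ Real.exp 1 * Real.exp (-x) := by
        rw [← Real.exp_add]
        apply Real.exp_le_exp.mpr; linarith
      calc ((n : ℝ) / x) ^ n * Real.exp (-(n : ℝ))
          ≤ 1 * Real.exp (-(n : ℝ)) := by
            apply mul_le_mul_of_nonneg_right h1 (Real.exp_pos _).le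
        _ = Real.exp (-(n : ℝ)) := one_mul _
        _ ≤ Real.exp 1 * Real.exp (-x) := h2
    have expand : Real.exp 1 / Real.sqrt 2 * D / x ^ (n + 1)
        = Real.exp 1 / Real.sqrt 2
            * (Real.sqrt (2 * n) * (((n : ℝ) / x) ^ n * Real.exp (-(n : ℝ)))) / x := by
      rw [mul_div_assoc, hDx]; ring
    rw [expand, hhalf]
    have hs2 : (0 : ℝ) < Real.sqrt 2 := by positivity
    have rhs_eq : Real.exp 1 ^ 2 * (x ^ ((1 : ℝ) / 2) / x) * Real.exp (-x)
        = Real.exp 1 / Real.sqrt 2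
            * (Real.sqrt 2 * x ^ ((1 : ℝ) / 2) * (Real.exp 1 * Real.exp (-x))) / x := by
      have hee : Real.exp 1 ^ 2 = Real.exp 2 := by
        rw [sq, ← Real.exp_add]; norm_num
      field_simp
    rw [rhs_eq]
    gcongr
  refine ⟨⟨main_low, main_up⟩, fun k => main_low.trans (floor_min x hx k), ⟨n, main_up⟩⟩
end

section
/- Let n ≥ 1. The set of vectors λ = (λ₁, …, λₙ) ∈ ℂⁿ for which there exist m, m′ ∈ ℤⁿ and α ∈ ℝ with ∑_{i=1}^n (m_i − α m′_i) λ_i = 0 and (m₁, …, mₙ) ≠ α·(m′₁, …, m′ₙ) (as vectors of real numbers) has Lebesgue measure zero in ℂⁿ (identified with ℝ^{2n}). -/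
open MeasureTheory

/-- Real-linear functional on `ℂⁿ` given by complex coefficients. -/
noncomputable def dotC {n : ℕ} (c : Fin n → ℂ) : (Fin n → ℂ) →ₗ[ℝ] ℂ where
  toFun x := ∑ i, c i * x i
  map_add' x y := by simp [mul_add, Finset.sum_add_distrib]
  map_smul' r x := by simp [Finset.smul_sum, mul_smul_comm, mul_left_comm]

/-- Real-linear functional on `ℝⁿ` given by real coefficients. -/
noncomputable def dotR {n : ℕ} (c : Fin n → ℝ) : (Fin n → ℝ) →ₗ[ℝ] ℝ where
  toFun x := ∑ i, c i * x i
  map_add' x y := by simp [mul_add, Finset.sum_add_distrib]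
  map_smul' r x := by simp [Finset.mul_sum, mul_left_comm]

lemma nullC {n : ℕ} (c : Fin n → ℂ) (hc : c ≠ 0) :
    volume {l : Fin n → ℂ | ∑ i, c i * l i = 0} = 0 := by
  obtain ⟨i, hi⟩ := Function.ne_iff.1 hc
  have hset : {l : Fin n → ℂ | ∑ i, c i * l i = 0}
      = (LinearMap.ker (dotC c) : Set (Fin n → ℂ)) := by
    ext l; simp [dotC, LinearMap.mem_ker]
  rw [hset]
  refine Measure.addHaar_submodule _ _ ?_
  intro h
  apply hi
  have := Submodule.eq_top_iff'.1 h (Pi.single i 1)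
  simpa [dotC, LinearMap.mem_ker, Pi.single_apply, mul_ite, Finset.sum_ite_eq'] using this

lemma nullR {n : ℕ} (c : Fin n → ℝ) (hc : c ≠ 0) :
    volume {x : Fin n → ℝ | ∑ i, c i * x i = 0} = 0 := by
  obtain ⟨i, hi⟩ := Function.ne_iff.1 hc
  have hset : {x : Fin n → ℝ | ∑ i, c i * x i = 0}
      = (LinearMap.ker (dotR c) : Set (Fin n → ℝ)) := by
    ext x; simp [dotR, LinearMap.mem_ker]
  rw [hset]
  refine Measure.addHaar_submodule _ _ ?_
  intro h
  apply hi
  have := Submodule.eq_top_iff'.1 h (Pi.single i 1)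
  simpa [dotR, LinearMap.mem_ker, Pi.single_apply, mul_ite, Finset.sum_ite_eq'] using this

lemma quadNull {n : ℕ} (m m' : Fin n → ℤ)
    (h : ∀ a b : ℝ, (∀ i, a * (m i : ℝ) + b * (m' i : ℝ) = 0) → a = 0 ∧ b = 0) :
    volume {l : Fin n → ℂ |
      (∑ i, (m i : ℂ) * l i).re * (∑ i, (m' i : ℂ) * l i).im
        = (∑ i, (m i : ℂ) * l i).im * (∑ i, (m' i : ℂ) * l i).re} = 0 := by
  classical
  -- `m` is nonzero as a real vector
  have hm : (fun i => (m i : ℝ)) ≠ 0 := by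
    intro h0
    have := (h 1 0 (fun i => by
      have : (m i : ℝ) = 0 := congrFun h0 i
      simp [this])).1
    norm_num at this
  -- the corresponding real set
  set W : Set ((Fin n → ℝ) × (Fin n → ℝ)) :=
    {p | (∑ i, (m i : ℝ) * p.1 i) * (∑ i, (m' i : ℝ) * p.2 i)
        = (∑ i, (m i : ℝ) * p.2 i) * (∑ i, (m' i : ℝ) * p.1 i)} with hW
  have hWm : MeasurableSet W := by
    apply measurableSet_eq_fun
    · exact ((Finset.measurable_sum _ fun i _ =>
        (measurable_const.mul ((measurable_pi_apply i).comp measurable_fst)))).mul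
        (Finset.measurable_sum _ fun i _ =>
        (measurable_const.mul ((measurable_pi_apply i).comp measurable_snd)))
    · exact ((Finset.measurable_sum _ fun i _ =>
        (measurable_const.mul ((measurable_pi_apply i).comp measurable_snd)))).mul
        (Finset.measurable_sum _ fun i _ =>
        (measurable_const.mul ((measurable_pi_apply i).comp measurable_fst)))
  -- the measure-preserving identification
  set F : (Fin n → ℂ) → (Fin n → ℝ) × (Fin n → ℝ) :=
    fun l => (fun i => (l i).re, fun i => (l i).im) with hF
  have h1 : MeasurePreserving
      (fun (l : Fin n → ℂ) (i : Fin n) => Complex.measurableEquivRealProd (l i)) :=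
    volume_preserving_pi (fun _ => Complex.volume_preserving_equiv_real_prod)
  have h2 := measurePreserving_arrowProdEquivProdArrow ℝ ℝ (Fin n)
    (fun _ => volume) (fun _ => volume)
  have hvol1 : (Measure.pi fun _ : Fin n => (volume : Measure ℝ).prod volume)
      = (volume : Measure (Fin n → ℝ × ℝ)) := by
    congr 1
  have hvol2 : ((Measure.pi fun _ : Fin n => (volume : Measure ℝ)).prod
      (Measure.pi fun _ : Fin n => (volume : Measure ℝ)))
      = (volume : Measure ((Fin n → ℝ) × (Fin n → ℝ))) := rfl
  rw [hvol1, hvol2] at h2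
  have hFmp : MeasurePreserving F volume volume := by
    have := h2.comp h1
    convert this using 1
    all_goals rfl
  have hpre : {l : Fin n → ℂ |
      (∑ i, (m i : ℂ) * l i).re * (∑ i, (m' i : ℂ) * l i).im
        = (∑ i, (m i : ℂ) * l i).im * (∑ i, (m' i : ℂ) * l i).re} = F ⁻¹' W := by
    ext l
    simp only [Set.mem_setOf_eq, Set.mem_preimage, hW, hF, Complex.re_sum, Complex.im_sum,
      Complex.mul_re, Complex.mul_im, Complex.intCast_re, Complex.intCast_im]
    simp
  rw [hpre, hFmp.measure_preimage hWm.nullMeasurableSet]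
  rw [show (volume : Measure ((Fin n → ℝ) × (Fin n → ℝ)))
      = (volume : Measure (Fin n → ℝ)).prod volume from rfl]
  rw [Measure.measure_prod_null hWm]
  have hae : ∀ᵐ x : Fin n → ℝ, ∑ i, (m i : ℝ) * x i ≠ 0 := by
    have := nullR (fun i => (m i : ℝ)) hm
    rw [ae_iff]
    simpa [not_not] using this
  filter_upwards [hae] with x hx
  show volume (Prod.mk x ⁻¹' W) = (0 : (Fin n → ℝ) → ENNReal) x
  simp only [Pi.zero_apply]
  set c : Fin n → ℝ :=
    fun j => (∑ i, (m i : ℝ) * x i) * (m' j : ℝ) - (∑ i, (m' i : ℝ) * x i) * (m j : ℝ) with hc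
  have hcne : c ≠ 0 := by
    intro h0
    have hab := h (-(∑ i, (m' i : ℝ) * x i)) (∑ i, (m i : ℝ) * x i) (fun i => by
      have := congrFun h0 i
      simp only [hc, Pi.zero_apply] at this
      linarith)
    exact hx hab.2
  have hslice : (Prod.mk x ⁻¹' W) = {y : Fin n → ℝ | ∑ j, c j * y j = 0} := by
    ext y
    have key : (∑ j, c j * y j)
        = (∑ i, (m i : ℝ) * x i) * (∑ i, (m' i : ℝ) * y i)
          - (∑ i, (m' i : ℝ) * x i) * (∑ i, (m i : ℝ) * y i) := by
      rw [Finset.mul_sum, Finset.mul_sum, ← Finset.sum_sub_distrib]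
      exact Finset.sum_congr rfl fun j _ => by simp only [hc]; ring
    simp only [Set.mem_preimage, Set.mem_setOf_eq, hW, key, sub_eq_zero]
    constructor
    · intro hh; rw [hh]; ring
    · intro hh; rw [hh]; ring
  rw [hslice]
  exact nullR c hcne

/-- The set of eigenvalue vectors violating the strong nonresonance
condition—i.e. admitting `m, m' ∈ ℤⁿ` and `α ∈ ℝ` with
`∑ (mᵢ - α m'ᵢ) λᵢ = 0` but `m ≠ α m'`—has Lebesgue measure zero in `ℂⁿ`. -/
theorem stmt_15 (n : ℕ) (hn : 1 ≤ n) :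
    volume {l : Fin n → ℂ |
      ∃ (m m' : Fin n → ℤ) (α : ℝ),
        (∑ i, ((m i : ℂ) - (α : ℂ) * (m' i : ℂ)) * l i = 0) ∧
        ¬ (∀ i, (m i : ℝ) = α * (m' i : ℝ))} = 0 := by
  classical
  have hsub : {l : Fin n → ℂ |
      ∃ (m m' : Fin n → ℤ) (α : ℝ),
        (∑ i, ((m i : ℂ) - (α : ℂ) * (m' i : ℂ)) * l i = 0) ∧
        ¬ (∀ i, (m i : ℝ) = α * (m' i : ℝ))} ⊆
      (⋃ k : {k : Fin n → ℤ // k ≠ 0},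
        {l : Fin n → ℂ | ∑ i, ((k : Fin n → ℤ) i : ℂ) * l i = 0}) ∪
      (⋃ p : {p : (Fin n → ℤ) × (Fin n → ℤ) //
          ∀ a b : ℝ, (∀ i, a * (p.1 i : ℝ) + b * (p.2 i : ℝ) = 0) → a = 0 ∧ b = 0},
        {l : Fin n → ℂ |
          (∑ i, ((p : (Fin n → ℤ) × (Fin n → ℤ)).1 i : ℂ) * l i).re *
            (∑ i, ((p : (Fin n → ℤ) × (Fin n → ℤ)).2 i : ℂ) * l i).im
          = (∑ i, ((p : (Fin n → ℤ) × (Fin n → ℤ)).1 i : ℂ) * l i).im *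
            (∑ i, ((p : (Fin n → ℤ) × (Fin n → ℤ)).2 i : ℂ) * l i).re}) := by
    rintro l ⟨m, m', α, hsum, hne⟩
    set A : ℂ := ∑ i, (m i : ℂ) * l i with hA
    set B : ℂ := ∑ i, (m' i : ℂ) * l i with hB
    have hAB : A = (α : ℂ) * B := by
      have h1 : ∑ i, ((m i : ℂ) - (α : ℂ) * (m' i : ℂ)) * l i
          = A - (α : ℂ) * B := by
        rw [hA, hB, Finset.mul_sum, ← Finset.sum_sub_distrib]
        exact Finset.sum_congr rfl fun i _ => by ring
      rw [h1] at hsum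
      linear_combination hsum
    by_cases hBz : B = 0
    · -- linear case
      have hAz : A = 0 := by rw [hAB, hBz, mul_zero]
      by_cases hm : m = 0
      · -- then m' must be nonzero and B = 0 puts us in a hyperplane
        have hm' : m' ≠ 0 := by
          intro h0
          apply hne
          intro i
          rw [hm, h0]
          simp
        exact Set.mem_union_left _ (Set.mem_iUnion.2 ⟨⟨m', hm'⟩, hBz⟩)
      · exact Set.mem_union_left _ (Set.mem_iUnion.2 ⟨⟨m, hm⟩, hAz⟩)
    · by_cases hdep : ∃ c : ℝ, ∀ i, (m i : ℝ) = c * (m' i : ℝ)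
      · exfalso
        obtain ⟨c, hcdep⟩ := hdep
        have hA' : A = (c : ℂ) * B := by
          rw [hA, hB, Finset.mul_sum]
          refine Finset.sum_congr rfl fun i _ => ?_
          have h1 : (m i : ℂ) = (c : ℂ) * (m' i : ℂ) := by
            exact_mod_cast congrArg Complex.ofReal (hcdep i)
          rw [h1, mul_assoc]
        have hcα : (c : ℂ) = (α : ℂ) := mul_right_cancel₀ hBz (by rw [← hA', hAB])
        have hcα' : c = α := by exact_mod_cast hcα
        exact hne fun i => by rw [← hcα']; exact hcdep i
      · -- independent case
        have hindep : ∀ a b : ℝ, (∀ i, a * (m i : ℝ) + b * (m' i : ℝ) = 0) → a = 0 ∧ b = 0 := by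
          intro a b hab
          by_cases ha : a = 0
          · refine ⟨ha, ?_⟩
            by_contra hb
            have hm'z : ∀ i, (m' i : ℝ) = 0 := by
              intro i
              have := hab i
              rw [ha] at this
              simp only [zero_mul, zero_add] at this
              exact (mul_eq_zero.1 this).resolve_left hb
            apply hBz
            rw [hB]
            refine Finset.sum_eq_zero fun i _ => ?_
            have : (m' i : ℂ) = 0 := by exact_mod_cast hm'z i
            rw [this, zero_mul]
          · exfalso
            apply hdep
            refine ⟨-b / a, fun i => ?_⟩
            have := hab i
            field_simp
            linarith
        refine Set.mem_union_right _ (Set.mem_iUnion.2 ⟨⟨(m, m'), hindep⟩, ?_⟩)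
        show A.re * B.im = A.im * B.re
        have hre : A.re = α * B.re := by rw [hAB]; simp [Complex.mul_re]
        have him : A.im = α * B.im := by rw [hAB]; simp [Complex.mul_im]
        rw [hre, him]
        ring
  refine measure_mono_null hsub (measure_union_null ?_ ?_)
  · refine measure_iUnion_null fun k => nullC _ ?_
    obtain ⟨i, hi⟩ := Function.ne_iff.1 k.2
    have hi' : ((k : Fin n → ℤ) i) ≠ 0 := by simpa using hi
    refine Function.ne_iff.2 ⟨i, ?_⟩
    simpa using (Int.cast_ne_zero (α := ℂ)).2 hi'
  · exact measure_iUnion_null fun p => quadNull _ _ p.2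
end

section
/- Let ρ > 0, let β₁, β₂ ∈ ℂ with Re β₁ > 0 and Re β₂ > 0, and let F, G be analytic on the disc D = {p ∈ ℂ : |p| < ρ}. Define f(p) = p^{β₁} F(p) and g(p) = p^{β₂} G(p) for p ∈ D ∖ (−∞, 0], using the principal branch w^β = exp(β log w). Then there exists a function H analytic on all of D such that for every p ∈ D ∖ (−∞, 0], the convolution ∫_{[0,p]} f(s) g(p − s) ds (integral along the straight segment from 0 to p) equals p^{β₁+β₂+1} H(p); moreover H(0) = F(0) G(0) Γ(β₁+1) Γ(β₂+1) / Γ(β₁+β₂+2). -/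
open intervalIntegral

open Set Metric Complex in
private lemma aux_mul_cpow {r : ℝ} (hr : 0 ≤ r) {z : ℂ} (hz : z ≠ 0) {β : ℂ}
    (hβ : β ≠ 0) : ((r : ℂ) * z) ^ β = (r : ℂ) ^ β * z ^ β := by
  rcases hr.eq_or_lt with h | h
  · simp [← h, Complex.zero_cpow hβ]
  · have hr0 : (r : ℂ) ≠ 0 := by exact_mod_cast h.ne'
    rw [Complex.cpow_def_of_ne_zero (mul_ne_zero hr0 hz),
      Complex.log_ofReal_mul h hz, Complex.cpow_def_of_ne_zero hr0,
      Complex.cpow_def_of_ne_zero hz, ← Complex.exp_add]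
    congr 1
    rw [← Complex.ofReal_log hr]
    ring

open Set Metric Complex in
private lemma aux_norm_cpow_le_one {r : ℝ} (h0 : 0 ≤ r) (h1 : r ≤ 1) {β : ℂ}
    (hβ : 0 < β.re) : ‖(r : ℂ) ^ β‖ ≤ 1 := by
  rcases h0.eq_or_lt with h | h
  · rw [← h, Complex.ofReal_zero, Complex.zero_cpow (fun hc => by simp [hc] at hβ)]
    simp
  · rw [Complex.norm_cpow_eq_rpow_re_of_pos h]
    exact Real.rpow_le_one h0 h1 hβ.le

open Set Metric Complex in
private lemma aux_cont_cpow {β : ℂ} (hβ : 0 < β.re) :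
    ContinuousOn (fun t : ℝ => (t : ℂ) ^ β) (Icc 0 1) := by
  intro t ht
  exact ((continuousAt_cpow_const_of_re_pos (Or.inl (by simpa using ht.1)) hβ).comp
    Complex.continuous_ofReal.continuousAt).continuousWithinAt

open Set Metric Complex in
private lemma aux_cont_cpow' {β : ℂ} (hβ : 0 < β.re) :
    ContinuousOn (fun t : ℝ => (1 - (t : ℂ)) ^ β) (Icc 0 1) := by
  intro t ht
  refine ((continuousAt_cpow_const_of_re_pos (Or.inl ?_) hβ).comp
    (continuous_const.sub Complex.continuous_ofReal).continuousAt).continuousWithinAt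
  simp [ht.2]

open Set Metric Complex in
private lemma aux_mem_ball {ρ : ℝ} {x c : ℂ} (hx : x ∈ ball (0 : ℂ) ρ) (hc : ‖c‖ ≤ 1) :
    c * x ∈ ball (0 : ℂ) ρ := by
  rw [mem_ball_zero_iff] at hx ⊢
  calc ‖c * x‖ = ‖c‖ * ‖x‖ := norm_mul _ _
    _ ≤ 1 * ‖x‖ := by gcongr
    _ < ρ := by simpa using hx

open Set Metric Complex in
private lemma aux_cont_comp {ρ : ℝ} {A : ℂ → ℂ} (hA : ContinuousOn A (ball (0 : ℂ) ρ))
    {x : ℂ} (hx : x ∈ ball (0 : ℂ) ρ) :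
    ContinuousOn (fun t : ℝ => A ((t : ℂ) * x)) (Icc 0 1) := by
  refine hA.comp ((Complex.continuous_ofReal.mul continuous_const).continuousOn) ?_
  intro t ht
  exact aux_mem_ball hx (by rw [Complex.norm_real, Real.norm_eq_abs, abs_le]; constructor <;> linarith [ht.1, ht.2])

open Set Metric Complex in
private lemma aux_cont_comp' {ρ : ℝ} {A : ℂ → ℂ} (hA : ContinuousOn A (ball (0 : ℂ) ρ))
    {x : ℂ} (hx : x ∈ ball (0 : ℂ) ρ) :
    ContinuousOn (fun t : ℝ => A ((1 - (t : ℂ)) * x)) (Icc 0 1) := by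
  refine hA.comp (((continuous_const.sub Complex.continuous_ofReal).mul continuous_const).continuousOn) ?_
  intro t ht
  refine aux_mem_ball hx ?_
  have : (1 : ℂ) - (t : ℂ) = ((1 - t : ℝ) : ℂ) := by push_cast; ring
  rw [this, Complex.norm_real, Real.norm_eq_abs, abs_le]
  constructor <;> linarith [ht.1, ht.2]

/-- Convolution maps `𝒯_{β₁} × 𝒯_{β₂}` into `𝒯_{β₁+β₂+1}`: if
`f(p) = p^{β₁}F(p)` and `g(p) = p^{β₂}G(p)` with `F, G` analytic on the disc
of radius `ρ`, then `(f*g)(p) = ∫_{[0,p]} f(s)g(p-s)ds = p^{β₁+β₂+1}H(p)`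
with `H` analytic on the whole disc and
`H(0) = F(0)G(0)Γ(β₁+1)Γ(β₂+1)/Γ(β₁+β₂+2)`. -/
theorem stmt_17 (ρ : ℝ) (hρ : 0 < ρ) (β₁ β₂ : ℂ)
    (hβ₁ : 0 < β₁.re) (hβ₂ : 0 < β₂.re) (F G : ℂ → ℂ)
    (hF : DifferentiableOn ℂ F (Metric.ball 0 ρ))
    (hG : DifferentiableOn ℂ G (Metric.ball 0 ρ)) :
    ∃ H : ℂ → ℂ, DifferentiableOn ℂ H (Metric.ball 0 ρ) ∧
      H 0 = F 0 * G 0 * Complex.Gamma (β₁ + 1) * Complex.Gamma (β₂ + 1) /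
        Complex.Gamma (β₁ + β₂ + 2) ∧
      ∀ p ∈ Metric.ball (0 : ℂ) ρ, ¬ (p.im = 0 ∧ p.re ≤ 0) →
        (∫ t in (0 : ℝ)..1,
            ((t : ℂ) * p) ^ β₁ * F ((t : ℂ) * p) *
              ((1 - (t : ℂ)) * p) ^ β₂ * G ((1 - (t : ℂ)) * p) * p) =
          p ^ (β₁ + β₂ + 1) * H p := by
  have hβ₁0 : β₁ ≠ 0 := fun h => by simp [h] at hβ₁
  have hβ₂0 : β₂ ≠ 0 := fun h => by simp [h] at hβ₂
  set φ : ℂ → ℝ → ℂ := fun x t =>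
    (t : ℂ) ^ β₁ * (1 - (t : ℂ)) ^ β₂ * (F ((t : ℂ) * x) * G ((1 - (t : ℂ)) * x)) with hφ
  refine ⟨fun x => ∫ t in (0:ℝ)..1, φ x t, ?_, ?_, ?_⟩
  · -- differentiability
    have hIoc : Set.uIoc (0:ℝ) 1 = Set.Ioc 0 1 := Set.uIoc_of_le zero_le_one
    have hIcc : Set.uIcc (0:ℝ) 1 = Set.Icc 0 1 := Set.uIcc_of_le zero_le_one
    have hFc := hF.continuousOn
    have hGc := hG.continuousOn
    have hF'c : ContinuousOn (deriv F) (Metric.ball 0 ρ) :=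
      ((hF.analyticOnNhd Metric.isOpen_ball).deriv).continuousOn
    have hG'c : ContinuousOn (deriv G) (Metric.ball 0 ρ) :=
      ((hG.analyticOnNhd Metric.isOpen_ball).deriv).continuousOn
    have hcont : ∀ x ∈ Metric.ball (0:ℂ) ρ, ContinuousOn (φ x) (Set.Icc 0 1) := fun x hx =>
      ((aux_cont_cpow hβ₁).mul (aux_cont_cpow' hβ₂)).mul
        ((aux_cont_comp hFc hx).mul (aux_cont_comp' hGc hx))
    intro x₀ hx₀
    apply DifferentiableAt.differentiableWithinAt
    have hx₀n : ‖x₀‖ < ρ := mem_ball_zero_iff.mp hx₀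
    set ε := (ρ - ‖x₀‖) / 2 with hεdef
    have hε_pos : 0 < ε := by rw [hεdef]; linarith
    set r := (ρ + ‖x₀‖) / 2 with hrdef
    have hr_lt : r < ρ := by rw [hrdef]; linarith
    have hr0 : (0:ℝ) ≤ r := by rw [hrdef]; positivity
    have hsub : Metric.closedBall (0:ℂ) r ⊆ Metric.ball 0 ρ :=
      Metric.closedBall_subset_ball hr_lt
    have hballs : ∀ x ∈ Metric.ball x₀ ε, ∀ c : ℂ, ‖c‖ ≤ 1 →
        c * x ∈ Metric.closedBall (0:ℂ) r := by
      intro x hx c hc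
      rw [Metric.mem_ball, dist_eq_norm] at hx
      rw [Metric.mem_closedBall, dist_zero_right, norm_mul]
      have hxn : ‖x‖ ≤ r := by
        calc ‖x‖ = ‖x₀ + (x - x₀)‖ := by ring_nf
          _ ≤ ‖x₀‖ + ‖x - x₀‖ := norm_add_le _ _
          _ ≤ r := by rw [hrdef]; rw [hεdef] at hx; linarith
      calc ‖c‖ * ‖x‖ ≤ 1 * r := by
            apply mul_le_mul hc hxn (norm_nonneg _) zero_le_one
        _ = r := one_mul r
    obtain ⟨M1, hM1⟩ := (isCompact_closedBall (0:ℂ) r).exists_bound_of_continuousOn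
      (hFc.mono hsub)
    obtain ⟨M2, hM2⟩ := (isCompact_closedBall (0:ℂ) r).exists_bound_of_continuousOn
      (hGc.mono hsub)
    obtain ⟨M3, hM3⟩ := (isCompact_closedBall (0:ℂ) r).exists_bound_of_continuousOn
      (hF'c.mono hsub)
    obtain ⟨M4, hM4⟩ := (isCompact_closedBall (0:ℂ) r).exists_bound_of_continuousOn
      (hG'c.mono hsub)
    have hM1_0 : 0 ≤ M1 := le_trans (norm_nonneg _) (hM1 0 (Metric.mem_closedBall_self hr0))
    have hM2_0 : 0 ≤ M2 := le_trans (norm_nonneg _) (hM2 0 (Metric.mem_closedBall_self hr0))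
    have hM3_0 : 0 ≤ M3 := le_trans (norm_nonneg _) (hM3 0 (Metric.mem_closedBall_self hr0))
    have hM4_0 : 0 ≤ M4 := le_trans (norm_nonneg _) (hM4 0 (Metric.mem_closedBall_self hr0))
    set φ' : ℂ → ℝ → ℂ := fun x t =>
      (t : ℂ) ^ β₁ * (1 - (t : ℂ)) ^ β₂ *
        (deriv F ((t : ℂ) * x) * (t : ℂ) * G ((1 - (t : ℂ)) * x) +
          F ((t : ℂ) * x) * (deriv G ((1 - (t : ℂ)) * x) * (1 - (t : ℂ)))) with hφ'
    have hnorm_t : ∀ t : ℝ, t ∈ Set.Icc (0:ℝ) 1 → ‖(t : ℂ)‖ ≤ 1 := by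
      intro t ht
      rw [Complex.norm_real, Real.norm_eq_abs, abs_le]
      exact ⟨by linarith [ht.1], ht.2⟩
    have hnorm_t' : ∀ t : ℝ, t ∈ Set.Icc (0:ℝ) 1 → ‖(1 : ℂ) - (t : ℂ)‖ ≤ 1 := by
      intro t ht
      rw [show (1:ℂ) - (t:ℂ) = ((1 - t : ℝ) : ℂ) by push_cast; ring,
        Complex.norm_real, Real.norm_eq_abs, abs_le]
      constructor <;> [linarith [ht.2]; linarith [ht.1]]
    have key := intervalIntegral.hasDerivAt_integral_of_dominated_loc_of_deriv_le
      (F := φ) (F' := φ') (x₀ := x₀) (a := (0:ℝ)) (b := 1)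
      (bound := fun _ => M3 * M2 + M1 * M4) (μ := MeasureTheory.volume) (Metric.ball_mem_nhds x₀ hε_pos)
      ?_ ?_ ?_ ?_ ?_ ?_
    · exact key.2.differentiableAt
    · -- hF_meas
      filter_upwards [Metric.isOpen_ball.eventually_mem hx₀] with x hx
      rw [hIoc]
      exact ((hcont x hx).mono Set.Ioc_subset_Icc_self).aestronglyMeasurable
        measurableSet_Ioc
    · -- hF_int
      apply ContinuousOn.intervalIntegrable
      rw [hIcc]
      exact hcont x₀ hx₀
    · -- hF'_meas
      rw [hIoc]
      refine (ContinuousOn.mono ?_ Set.Ioc_subset_Icc_self).aestronglyMeasurable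
        measurableSet_Ioc
      exact ((aux_cont_cpow hβ₁).mul (aux_cont_cpow' hβ₂)).mul
        ((((aux_cont_comp hF'c hx₀).mul Complex.continuous_ofReal.continuousOn).mul
            (aux_cont_comp' hGc hx₀)).add
          ((aux_cont_comp hFc hx₀).mul ((aux_cont_comp' hG'c hx₀).mul
            ((continuous_const.sub Complex.continuous_ofReal).continuousOn))))
    · -- h_bound
      apply Filter.Eventually.of_forall
      intro t ht x hx
      rw [hIoc] at ht
      have htIcc : t ∈ Set.Icc (0:ℝ) 1 := ⟨ht.1.le, ht.2⟩
      have hmem1 : (t : ℂ) * x ∈ Metric.closedBall (0:ℂ) r :=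
        hballs x hx _ (hnorm_t t htIcc)
      have hmem2 : (1 - (t : ℂ)) * x ∈ Metric.closedBall (0:ℂ) r :=
        hballs x hx _ (hnorm_t' t htIcc)
      have hb1 : ‖(t : ℂ) ^ β₁‖ ≤ 1 := aux_norm_cpow_le_one ht.1.le ht.2 hβ₁
      have hb2 : ‖(1 - (t : ℂ)) ^ β₂‖ ≤ 1 := by
        rw [show (1:ℂ) - (t:ℂ) = ((1 - t : ℝ) : ℂ) by push_cast; ring]
        exact aux_norm_cpow_le_one (by linarith [ht.2]) (by linarith [ht.1]) hβ₂
      have hsumA : ‖deriv F ((t : ℂ) * x) * (t : ℂ) * G ((1 - (t : ℂ)) * x)‖ ≤ M3 * M2 := by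
        rw [norm_mul, norm_mul]
        calc ‖deriv F ((t : ℂ) * x)‖ * ‖(t : ℂ)‖ * ‖G ((1 - (t : ℂ)) * x)‖
            ≤ M3 * 1 * M2 := by
              apply mul_le_mul (mul_le_mul (hM3 _ hmem1) (hnorm_t t htIcc)
                (norm_nonneg _) hM3_0) (hM2 _ hmem2) (norm_nonneg _) (by positivity)
          _ = M3 * M2 := by ring
      have hsumB : ‖F ((t : ℂ) * x) * (deriv G ((1 - (t : ℂ)) * x) * (1 - (t : ℂ)))‖
          ≤ M1 * M4 := by
        rw [norm_mul, norm_mul]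
        calc ‖F ((t : ℂ) * x)‖ * (‖deriv G ((1 - (t : ℂ)) * x)‖ * ‖(1:ℂ) - (t : ℂ)‖)
            ≤ M1 * (M4 * 1) := by
              apply mul_le_mul (hM1 _ hmem1) (mul_le_mul (hM4 _ hmem2)
                (hnorm_t' t htIcc) (norm_nonneg _) hM4_0) (by positivity) hM1_0
          _ = M1 * M4 := by ring
      calc ‖φ' x t‖ = ‖(t : ℂ) ^ β₁‖ * ‖(1 - (t : ℂ)) ^ β₂‖ *
            ‖deriv F ((t : ℂ) * x) * (t : ℂ) * G ((1 - (t : ℂ)) * x) +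
              F ((t : ℂ) * x) * (deriv G ((1 - (t : ℂ)) * x) * (1 - (t : ℂ)))‖ := by
            rw [hφ']; rw [norm_mul, norm_mul]
        _ ≤ 1 * 1 * (M3 * M2 + M1 * M4) := by
            apply mul_le_mul (mul_le_mul hb1 hb2 (norm_nonneg _) zero_le_one)
              (le_trans (norm_add_le _ _) (add_le_add hsumA hsumB)) (norm_nonneg _)
              (by norm_num)
        _ = M3 * M2 + M1 * M4 := by ring
    · -- bound integrable
      exact intervalIntegrable_const
    · -- h_diff
      apply Filter.Eventually.of_forall
      intro t ht x hx
      rw [hIoc] at ht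
      have htIcc : t ∈ Set.Icc (0:ℝ) 1 := ⟨ht.1.le, ht.2⟩
      have hmem1 : (t : ℂ) * x ∈ Metric.ball (0:ℂ) ρ :=
        hsub (hballs x hx _ (hnorm_t t htIcc))
      have hmem2 : (1 - (t : ℂ)) * x ∈ Metric.ball (0:ℂ) ρ :=
        hsub (hballs x hx _ (hnorm_t' t htIcc))
      have hF_at : HasDerivAt F (deriv F ((t : ℂ) * x)) ((t : ℂ) * x) :=
        (hF.differentiableAt (Metric.isOpen_ball.mem_nhds hmem1)).hasDerivAt
      have hG_at : HasDerivAt G (deriv G ((1 - (t : ℂ)) * x)) ((1 - (t : ℂ)) * x) :=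
        (hG.differentiableAt (Metric.isOpen_ball.mem_nhds hmem2)).hasDerivAt
      have hi1 : HasDerivAt (fun y : ℂ => (t : ℂ) * y) (t : ℂ) x := by
        simpa using (hasDerivAt_id x).const_mul (t : ℂ)
      have hi2 : HasDerivAt (fun y : ℂ => (1 - (t : ℂ)) * y) (1 - (t : ℂ)) x := by
        simpa using (hasDerivAt_id x).const_mul (1 - (t : ℂ))
      have h1 : HasDerivAt (fun y => F ((t : ℂ) * y)) (deriv F ((t : ℂ) * x) * (t : ℂ)) x :=
        hF_at.comp x hi1
      have h2 : HasDerivAt (fun y => G ((1 - (t : ℂ)) * y))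
          (deriv G ((1 - (t : ℂ)) * x) * (1 - (t : ℂ))) x := hG_at.comp x hi2
      exact (h1.mul h2).const_mul ((t : ℂ) ^ β₁ * (1 - (t : ℂ)) ^ β₂)
  · -- value at 0
    have h1 : (∫ t in (0:ℝ)..1, φ 0 t)
        = (∫ t in (0:ℝ)..1, (t : ℂ) ^ β₁ * (1 - (t : ℂ)) ^ β₂) * (F 0 * G 0) := by
      rw [← intervalIntegral.integral_mul_const]
      simp [hφ]
    have h2 : (∫ t in (0:ℝ)..1, (t : ℂ) ^ β₁ * (1 - (t : ℂ)) ^ β₂)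
        = Complex.betaIntegral (β₁ + 1) (β₂ + 1) := by
      rw [Complex.betaIntegral]
      congr 1
      ext t
      rw [add_sub_cancel_right, add_sub_cancel_right]
    have h3 := Complex.Gamma_mul_Gamma_eq_betaIntegral
      (by simp only [Complex.add_re, Complex.one_re]; linarith : 0 < (β₁ + 1).re)
      (by simp only [Complex.add_re, Complex.one_re]; linarith : 0 < (β₂ + 1).re)
    have h4 : β₁ + 1 + (β₂ + 1) = β₁ + β₂ + 2 := by ring
    have h5 : Complex.Gamma (β₁ + β₂ + 2) ≠ 0 := by
      apply Complex.Gamma_ne_zero_of_re_pos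
      simp only [Complex.add_re]
      norm_num
      linarith
    show (∫ t in (0:ℝ)..1, φ 0 t) = _
    rw [h1, h2]
    rw [h4] at h3
    field_simp
    linear_combination (-(F 0 * G 0)) * h3
  · -- the key identity
    intro p hp hslit
    have hp0 : p ≠ 0 := by
      intro h
      exact hslit (by simp [h])
    have key : Set.EqOn
        (fun t : ℝ => ((t : ℂ) * p) ^ β₁ * F ((t : ℂ) * p) *
          ((1 - (t : ℂ)) * p) ^ β₂ * G ((1 - (t : ℂ)) * p) * p)
        (fun t : ℝ => p ^ (β₁ + β₂ + 1) * φ p t) (Set.uIcc 0 1) := by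
      intro t ht
      rw [Set.uIcc_of_le (by norm_num : (0:ℝ) ≤ 1)] at ht
      have h1t : (1 : ℂ) - (t : ℂ) = ((1 - t : ℝ) : ℂ) := by push_cast; ring
      have e1 : ((t : ℂ) * p) ^ β₁ = (t : ℂ) ^ β₁ * p ^ β₁ :=
        aux_mul_cpow ht.1 hp0 hβ₁0
      have e2 : ((1 - (t : ℂ)) * p) ^ β₂ = (1 - (t : ℂ)) ^ β₂ * p ^ β₂ := by
        rw [h1t]
        exact aux_mul_cpow (by linarith [ht.2]) hp0 hβ₂0
      have e3 : p ^ (β₁ + β₂ + 1) = p ^ β₁ * p ^ β₂ * p := by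
        rw [Complex.cpow_add _ _ hp0, Complex.cpow_add _ _ hp0, Complex.cpow_one]
      simp only [hφ, e1, e2, e3]
      ring
    rw [intervalIntegral.integral_congr key, intervalIntegral.integral_const_mul]
end
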